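/- Let H ≥ 1 be an integer and define α_t = (H+1)/(H+t) for integers t ≥ 1, and for 1 ≤ i ≤ τ set α_τ^i := α_i · ∏_{j=i+1}^{τ} (1 − α_j). Then for every integer τ ≥ 1, Σ_{i=1}^{τ} (α_τ^i)² ≤ 2H/τ. -/

import Mathlib

open Finset

/-- Property 2 of the step-size weights of Jin et al. (2018):
`Σ_{i=1}^τ (α_τ^i)² ≤ 2H/τ`. -/
theorem stepsize_weights_sq_sum_bound
    (H : ℕ) (hH : 1 ≤ H)
    (α : ℕ → ℝ) (hα : ∀ t, α t = ((H : ℝ) + 1) / ((H : ℝ) + t))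
    (w : ℕ → ℕ → ℝ)
    (hw : ∀ τ i, w τ i = α i * ∏ j ∈ Icc (i + 1) τ, (1 - α j)) :
    ∀ τ : ℕ, 1 ≤ τ →
      ∑ i ∈ Icc 1 τ, (w τ i) ^ 2 ≤ 2 * (H : ℝ) / τ := by
  have hHpos : (0:ℝ) < H := by exact_mod_cast hH
  have hden : ∀ t : ℕ, (0:ℝ) < (H:ℝ) + t := by
    intro t
    positivity
  have hαpos : ∀ t : ℕ, 0 < α t := by
    intro t
    rw [hα]
    positivity
  have h1α : ∀ j : ℕ, 1 ≤ j → 0 ≤ 1 - α j := by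
    intro j hj
    rw [hα]
    have : ((H:ℝ) + 1) / ((H:ℝ) + j) ≤ 1 := by
      rw [div_le_one (hden j)]
      have : (1:ℝ) ≤ j := by exact_mod_cast hj
      linarith
    linarith
  have hwnn : ∀ τ i : ℕ, 1 ≤ i → 0 ≤ w τ i := by
    intro τ i hi
    rw [hw]
    apply mul_nonneg (le_of_lt (hαpos i))
    apply Finset.prod_nonneg
    intro j hj
    rw [Finset.mem_Icc] at hj
    exact h1α j (by omega)
  -- sum of weights is 1
  have hsum : ∀ τ : ℕ, 1 ≤ τ → ∑ i ∈ Icc 1 τ, w τ i = 1 := by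
    intro τ hτ
    induction τ with
    | zero => omega
    | succ n ih =>
      rcases Nat.lt_or_ge n 1 with h1 | h1
      · -- n = 0, τ = 1
        have hn0 : n = 0 := by omega
        subst hn0
        rw [show Icc 1 1 = {1} from rfl, Finset.sum_singleton, hw]
        rw [show Icc (1+1) 1 = ∅ from Finset.Icc_eq_empty (by omega),
          Finset.prod_empty, mul_one, hα]
        push_cast
        field_simp
      · rw [Finset.sum_Icc_succ_top (by omega : 1 ≤ n + 1)]
        have hstep : ∑ i ∈ Icc 1 n, w (n+1) i
            = (1 - α (n+1)) * ∑ i ∈ Icc 1 n, w n i := by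
          rw [Finset.mul_sum]
          apply Finset.sum_congr rfl
          intro i hi
          rw [Finset.mem_Icc] at hi
          rw [hw, hw, Finset.prod_Icc_succ_top (by omega : i + 1 ≤ n + 1)]
          ring
        rw [hstep, ih h1, hw,
          show Icc (n+1+1) (n+1) = ∅ from Finset.Icc_eq_empty (by omega),
          Finset.prod_empty, mul_one]
        ring
  -- each weight is at most (H+1)/(H+τ)
  have hbound : ∀ τ i : ℕ, 1 ≤ i → i ≤ τ → w τ i ≤ ((H:ℝ) + 1) / ((H:ℝ) + τ) := by
    intro τ
    induction τ with
    | zero => intro i h1 h2; omega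
    | succ n ih =>
      intro i h1 h2
      rcases Nat.lt_or_ge n i with h | h
      · -- i = n + 1
        have hi : i = n + 1 := by omega
        subst hi
        rw [hw, show Icc (n+1+1) (n+1) = ∅ from Finset.Icc_eq_empty (by omega),
          Finset.prod_empty, mul_one, hα]
      · -- i ≤ n
        rw [hw, Finset.prod_Icc_succ_top (by omega : i + 1 ≤ n + 1),
          ← mul_assoc, ← hw]
        have hwn := ih i h1 h
        have h1a : 0 ≤ 1 - α (n+1) := h1α (n+1) (by omega)
        have hle : w n i * (1 - α (n+1))
            ≤ ((H:ℝ) + 1) / ((H:ℝ) + n) * (1 - α (n+1)) :=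
          mul_le_mul_of_nonneg_right hwn h1a
        refine hle.trans ?_
        have hd1 : (0:ℝ) < (H:ℝ) + n := hden n
        have hd2 : (0:ℝ) < (H:ℝ) + (n:ℝ) + 1 := by linarith
        have key : 1 - α (n+1) = (n:ℝ) / ((H:ℝ) + (n:ℝ) + 1) := by
          rw [hα]
          push_cast
          field_simp
          ring
        rw [key, div_mul_div_comm]
        push_cast
        rw [div_le_div_iff₀ (by positivity) (by linarith)]
        have hn0 : (0:ℝ) ≤ (n:ℝ) := Nat.cast_nonneg n
        nlinarith [mul_pos (mul_pos hHpos hd2) (show (0:ℝ) < (H:ℝ) + 1 by linarith)]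
  -- conclusion
  intro τ hτ
  have hτpos : (0:ℝ) < τ := by exact_mod_cast hτ
  have hmax : ∀ i ∈ Icc 1 τ, w τ i ≤ 2 * (H:ℝ) / τ := by
    intro i hi
    rw [Finset.mem_Icc] at hi
    refine (hbound τ i hi.1 hi.2).trans ?_
    rw [div_le_div_iff₀ (hden τ) hτpos]
    have hτH : (1:ℝ) ≤ H := by exact_mod_cast hH
    nlinarith
  calc ∑ i ∈ Icc 1 τ, (w τ i) ^ 2
      ≤ ∑ i ∈ Icc 1 τ, w τ i * (2 * (H:ℝ) / τ) := by
        apply Finset.sum_le_sum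
        intro i hi
        rw [Finset.mem_Icc] at hi
        have h0 := hwnn τ i hi.1
        rw [sq]
        exact mul_le_mul_of_nonneg_left (hmax i (by rw [Finset.mem_Icc]; exact hi)) h0
    _ = (∑ i ∈ Icc 1 τ, w τ i) * (2 * (H:ℝ) / τ) := (Finset.sum_mul _ _ _).symm
    _ = 2 * (H:ℝ) / τ := by rw [hsum τ hτ, one_mul]
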